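/- Let Λ = {λ₁, λ₂, λ₃, λ₄} be real with λ₁ ≥ λ₂ ≥ 0 > λ₃ ≥ λ₄, λ₂ + λ₃ < 0, λ₁ ≥ |λⱼ| for j = 2,3,4, and λ₁+λ₂+λ₃+λ₄ ≥ 0. Then Λ is the spectrum of a 4×4 centrosymmetric nonnegative matrix. -/

import Mathlib

open Matrix Polynomial

/-- The n×n exchange (counteridentity) matrix. -/
def Jmat (n : ℕ) : Matrix (Fin n) (Fin n) ℝ :=
  Matrix.of fun i j => if (i : ℕ) + (j : ℕ) = n - 1 then 1 else 0

set_option maxHeartbeats 1600000 in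
theorem four_reals_two_negative_centrosymmetric (l1 l2 l3 l4 : ℝ)
    (h12 : l2 ≤ l1) (h2 : 0 ≤ l2) (h3 : l3 < 0) (h34 : l4 ≤ l3)
    (h23 : l2 + l3 < 0)
    (hd2 : |l2| ≤ l1) (hd3 : |l3| ≤ l1) (hd4 : |l4| ≤ l1)
    (hsum : 0 ≤ l1 + l2 + l3 + l4) :
    ∃ M : Matrix (Fin 4) (Fin 4) ℝ, Jmat 4 * M * Jmat 4 = M ∧ (∀ i j, 0 ≤ M i j) ∧
      M.charpoly = (X - C l1) * (X - C l2) * (X - C l3) * (X - C l4) := by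
  have hv0 : ((0 : Fin 4) : ℕ) = 0 := rfl
  have hv1 : ((1 : Fin 4) : ℕ) = 1 := rfl
  have hv2 : ((2 : Fin 4) : ℕ) = 2 := rfl
  have hv3 : ((3 : Fin 4) : ℕ) = 3 := rfl
  set s : ℝ := l1 + l2 + l3 with hs
  set p : ℝ := -l3 * s - l1 * l2 with hp
  refine ⟨!![0, 1/2, 1/2, -l3;
             p/2, (s+l4)/2, (s-l4)/2, p/2;
             p/2, (s-l4)/2, (s+l4)/2, p/2;
             -l3, 1/2, 1/2, 0], ?_, ?_, ?_⟩
  · ext i j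
    fin_cases i <;> fin_cases j <;>
      norm_num [Jmat, Matrix.mul_apply, Fin.sum_univ_four, hv0, hv1, hv2, hv3] <;> rfl
  · have hl13 : 0 ≤ l1 + l3 := by
      rcases abs_le.mp hd3 with ⟨h, _⟩; linarith
    have hl14 : 0 ≤ l1 + l4 := by
      rcases abs_le.mp hd4 with ⟨h, _⟩; linarith
    have hpnn : 0 ≤ p := by
      have : p = -((l1 + l3) * (l2 + l3)) := by rw [hp, hs]; ring
      rw [this]
      have := mul_nonpos_of_nonneg_of_nonpos hl13 (le_of_lt h23)
      linarith
    intro i j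
    fin_cases i <;> fin_cases j <;> simp <;> nlinarith [hpnn, hl13, hl14]
  · apply Polynomial.funext
    intro x
    have key : ∀ A : Matrix (Fin 4) (Fin 4) ℝ[X], eval x A.det = (A.map (eval x)).det := by
      intro A
      have := RingHom.map_det (Polynomial.evalRingHom x) A
      simpa using this
    rw [Matrix.charpoly, key]
    have hM : (charmatrix !![0, 1/2, 1/2, -l3;
             p/2, (s+l4)/2, (s-l4)/2, p/2;
             p/2, (s-l4)/2, (s+l4)/2, p/2;
             -l3, 1/2, 1/2, 0]).map (eval x) =
        !![x - 0, -(1/2), -(1/2), -(-l3);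
           -(p/2), x - (s+l4)/2, -((s-l4)/2), -(p/2);
           -(p/2), -((s-l4)/2), x - (s+l4)/2, -(p/2);
           -(-l3), -(1/2), -(1/2), x - 0] := by
      ext i j
      fin_cases i <;> fin_cases j <;>
        simp [charmatrix_apply, Matrix.diagonal_apply, Matrix.one_apply, Fin.ext_iff,
          show ((3:Fin 4):ℕ) = 3 from rfl, show ((2:Fin 4):ℕ) = 2 from rfl,
          show ((1:Fin 4):ℕ) = 1 from rfl, show ((0:Fin 4):ℕ) = 0 from rfl]
    rw [hM]
    simp only [eval_mul, eval_sub, eval_X, eval_C]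
    simp [Matrix.det_succ_row_zero, Fin.sum_univ_succ,
      show Fin.castSucc (0:Fin 3) = (0:Fin 4) from rfl,
      show Fin.castSucc (1:Fin 3) = (1:Fin 4) from rfl,
      show Fin.castSucc (2:Fin 3) = (2:Fin 4) from rfl,
      show Fin.castSucc (0:Fin 2) = (0:Fin 3) from rfl,
      show Fin.castSucc (1:Fin 2) = (1:Fin 3) from rfl,
      show Fin.castSucc (0:Fin 1) = (0:Fin 2) from rfl,
      show Fin.succAbove (0:Fin 4) (0:Fin 3) = (1:Fin 4) from rfl,
    show Fin.succAbove (0:Fin 4) (1:Fin 3) = (2:Fin 4) from rfl,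
    show Fin.succAbove (0:Fin 4) (2:Fin 3) = (3:Fin 4) from rfl,
    show Fin.succAbove (1:Fin 4) (0:Fin 3) = (0:Fin 4) from rfl,
    show Fin.succAbove (1:Fin 4) (1:Fin 3) = (2:Fin 4) from rfl,
    show Fin.succAbove (1:Fin 4) (2:Fin 3) = (3:Fin 4) from rfl,
    show Fin.succAbove (2:Fin 4) (0:Fin 3) = (0:Fin 4) from rfl,
    show Fin.succAbove (2:Fin 4) (1:Fin 3) = (1:Fin 4) from rfl,
    show Fin.succAbove (2:Fin 4) (2:Fin 3) = (3:Fin 4) from rfl,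
    show Fin.succAbove (3:Fin 4) (0:Fin 3) = (0:Fin 4) from rfl,
    show Fin.succAbove (3:Fin 4) (1:Fin 3) = (1:Fin 4) from rfl,
    show Fin.succAbove (3:Fin 4) (2:Fin 3) = (2:Fin 4) from rfl,
    show Fin.succAbove (0:Fin 3) (0:Fin 2) = (1:Fin 3) from rfl,
    show Fin.succAbove (0:Fin 3) (1:Fin 2) = (2:Fin 3) from rfl,
    show Fin.succAbove (1:Fin 3) (0:Fin 2) = (0:Fin 3) from rfl,
    show Fin.succAbove (1:Fin 3) (1:Fin 2) = (2:Fin 3) from rfl,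
    show Fin.succAbove (2:Fin 3) (0:Fin 2) = (0:Fin 3) from rfl,
    show Fin.succAbove (2:Fin 3) (1:Fin 2) = (1:Fin 3) from rfl,
    show Fin.succAbove (0:Fin 2) (0:Fin 1) = (1:Fin 2) from rfl,
    show Fin.succAbove (1:Fin 2) (0:Fin 1) = (0:Fin 2) from rfl,
      Matrix.cons_val_two, Matrix.cons_val_three, Matrix.vecHead, Matrix.vecTail]
    ring
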